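/- Any s-sparse tensor 𝒳 ∈ R^{N1×…×Nd} admits a decomposition 𝒳 = Σ_{i=1}^K a_i^{(1)} ∘ … ∘ a_i^{(d)} with each a_i^{(j)} belonging to the column space R_j(𝒳) of the mode-j unfolding, and with K ≤ s^{d-1}. -/

import Mathlib

/-- A `d`-mode tensor is `s`-sparse if it has at most `s` nonzero entries. -/
def SparseTensor {d : ℕ} {N : Fin d → ℕ} (s : ℕ) (X : (∀ j, Fin (N j)) → ℝ) : Prop :=
  (Finset.univ.filter fun g : ∀ j, Fin (N j) => X g ≠ 0).card ≤ s

/-- The column space `R_i(X)` of the mode-`i` unfolding of `X`. -/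
def colSpaceUnfold {d : ℕ} {N : Fin d → ℕ} (X : (∀ j, Fin (N j)) → ℝ) (i : Fin d) :
    Submodule ℝ (Fin (N i) → ℝ) :=
  Submodule.span ℝ (Set.range fun g : ∀ j, Fin (N j) => fun a => X (Function.update g i a))

private lemma piFinset_sum_split {ι : Type*} [Fintype ι] [DecidableEq ι] {γ : ι → Type*}
    [∀ i, DecidableEq (γ i)] (t : ∀ i, Finset (γ i)) (i0 : ι) (F : (∀ i, γ i) → ℝ) :
    ∑ h ∈ Fintype.piFinset t, F h
      = ∑ a ∈ t i0, ∑ h ∈ Fintype.piFinset (Function.update t i0 {a}), F h := by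
  rw [← Finset.sum_fiberwise_of_maps_to (g := fun h => h i0) (t := t i0)
    (fun h hh => (Fintype.mem_piFinset.mp hh) i0) F]
  refine Finset.sum_congr rfl fun a ha => ?_
  congr 1
  ext h
  simp only [Finset.mem_filter, Fintype.mem_piFinset]
  constructor
  · rintro ⟨hmem, hi⟩ j
    by_cases hj : j = i0
    · subst hj
      rw [Function.update_self]
      exact Finset.mem_singleton.mpr hi
    · rw [Function.update_of_ne hj]
      exact hmem j
  · intro hmem
    have h1 := hmem i0
    rw [Function.update_self] at h1
    have h1' := Finset.mem_singleton.mp h1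
    refine ⟨fun j => ?_, h1'⟩
    by_cases hj : j = i0
    · subst hj; rw [h1']; exact ha
    · have := hmem j
      rwa [Function.update_of_ne hj] at this

/-- the selection finsets: free over modes in `E`, pinned to `g` elsewhere. -/
private def SFa {d : ℕ} {N : Fin d → ℕ} (E : Finset (Fin d)) (g : ∀ j, Fin (N j)) :
    ∀ j, Finset (Fin (N j)) :=
  fun j => if j ∈ E then Finset.univ else {g j}

/-- partial contraction of `X` against `ψ`-functionals in the modes of `E`. -/
private def Ca {d : ℕ} {N M : Fin d → ℕ} (X : (∀ j, Fin (N j)) → ℝ)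
    (ψ : ∀ j, Fin (M j) → Fin (N j) → ℝ) (E : Finset (Fin d))
    (β : ∀ j, Fin (M j)) (g : ∀ j, Fin (N j)) : ℝ :=
  ∑ h ∈ Fintype.piFinset (SFa E g), X h * ∏ j ∈ E, ψ j (β j) (h j)

private lemma mem_SFa_of_not_mem {d : ℕ} {N : Fin d → ℕ} {E : Finset (Fin d)}
    {g h : ∀ j, Fin (N j)} (hh : h ∈ Fintype.piFinset (SFa E g)) {j : Fin d} (hj : j ∉ E) :
    h j = g j := by
  have := (Fintype.mem_piFinset.mp hh) j
  simpa [SFa, hj] using this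

private lemma Ca_congr {d : ℕ} {N M : Fin d → ℕ} (X : (∀ j, Fin (N j)) → ℝ)
    (ψ : ∀ j, Fin (M j) → Fin (N j) → ℝ) (E : Finset (Fin d))
    (β : ∀ j, Fin (M j)) (g g' : ∀ j, Fin (N j)) (hgg : ∀ j ∉ E, g j = g' j) :
    Ca X ψ E β g = Ca X ψ E β g' := by
  have hS : SFa E g = SFa E g' := by
    funext j
    by_cases hj : j ∈ E <;> simp [SFa, hj, hgg]
  unfold Ca
  rw [hS]

private lemma Ca_update {d : ℕ} {N M : Fin d → ℕ} (X : (∀ j, Fin (N j)) → ℝ)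
    (ψ : ∀ j, Fin (M j) → Fin (N j) → ℝ) (E : Finset (Fin d)) {j₀ : Fin d} (hj₀ : j₀ ∉ E)
    (β : ∀ j, Fin (M j)) (g : ∀ j, Fin (N j)) (a : Fin (N j₀)) :
    Ca X ψ E β (Function.update g j₀ a)
      = ∑ h ∈ Fintype.piFinset (SFa E g),
          X (Function.update h j₀ a) * ∏ j ∈ E, ψ j (β j) (h j) := by
  unfold Ca
  refine Finset.sum_nbij' (i := fun h => Function.update h j₀ (g j₀))
    (j := fun h => Function.update h j₀ a) ?_ ?_ ?_ ?_ ?_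
  · intro h hh
    rw [Fintype.mem_piFinset] at hh ⊢
    intro j
    by_cases hj : j = j₀
    · subst hj
      show Function.update h j (g j) j ∈ SFa E g j
      rw [Function.update_self]
      simp [SFa, hj₀]
    · show Function.update h j₀ (g j₀) j ∈ SFa E g j
      rw [Function.update_of_ne hj]
      have := hh j
      by_cases hjE : j ∈ E
      · simp [SFa, hjE]
      · simp only [SFa, if_neg hjE, Finset.mem_singleton] at this ⊢
        rw [this, Function.update_of_ne hj]
  · intro h hh
    rw [Fintype.mem_piFinset] at hh ⊢
    intro j
    by_cases hj : j = j₀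
    · subst hj
      show Function.update h j a j ∈ SFa E (Function.update g j a) j
      rw [Function.update_self]
      simp [SFa, hj₀]
    · show Function.update h j₀ a j ∈ SFa E (Function.update g j₀ a) j
      rw [Function.update_of_ne hj]
      have := hh j
      by_cases hjE : j ∈ E
      · simp [SFa, hjE]
      · simp only [SFa, if_neg hjE, Finset.mem_singleton] at this ⊢
        rw [this, Function.update_of_ne hj]
  · intro h hh
    have h0 : h j₀ = a := by
      have := mem_SFa_of_not_mem hh hj₀
      rwa [Function.update_self] at this
    show Function.update (Function.update h j₀ (g j₀)) j₀ a = h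
    funext j
    by_cases hj : j = j₀
    · subst hj; rw [Function.update_self, h0]
    · rw [Function.update_of_ne hj, Function.update_of_ne hj]
  · intro h hh
    have h0 : h j₀ = g j₀ := mem_SFa_of_not_mem hh hj₀
    show Function.update (Function.update h j₀ a) j₀ (g j₀) = h
    funext j
    by_cases hj : j = j₀
    · subst hj; rw [Function.update_self, h0]
    · rw [Function.update_of_ne hj, Function.update_of_ne hj]
  · intro h hh
    have h0 : h j₀ = a := by
      have := mem_SFa_of_not_mem hh hj₀
      rwa [Function.update_self] at this
    show X h * _ = X (Function.update (Function.update h j₀ (g j₀)) j₀ a) * _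
    congr 1
    · congr 1
      funext j
      by_cases hj : j = j₀
      · subst hj; rw [Function.update_self, h0]
      · rw [Function.update_of_ne hj, Function.update_of_ne hj]
    · refine Finset.prod_congr rfl fun j hjE => ?_
      have hj : j ≠ j₀ := fun hq => hj₀ (hq ▸ hjE)
      show ψ j (β j) (h j) = ψ j (β j) (Function.update h j₀ (g j₀) j)
      rw [Function.update_of_ne hj]

private lemma piFinset_sum_singleton_swap {ι : Type*} [Fintype ι] [DecidableEq ι]
    {γ : ι → Type*} [∀ i, DecidableEq (γ i)] (t : ∀ i, Finset (γ i)) (i0 : ι)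
    (c c' : γ i0) (F : (∀ i, γ i) → ℝ) :
    ∑ h ∈ Fintype.piFinset (Function.update t i0 {c}), F h
      = ∑ h ∈ Fintype.piFinset (Function.update t i0 {c'}), F (Function.update h i0 c) := by
  refine Finset.sum_nbij' (i := fun h => Function.update h i0 c')
    (j := fun h => Function.update h i0 c) ?_ ?_ ?_ ?_ ?_
  · intro h hh
    rw [Fintype.mem_piFinset] at hh ⊢
    intro j
    by_cases hj : j = i0
    · subst hj
      show Function.update h j c' j ∈ Function.update t j {c'} j
      rw [Function.update_self, Function.update_self]
      exact Finset.mem_singleton_self _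
    · show Function.update h i0 c' j ∈ Function.update t i0 {c'} j
      rw [Function.update_of_ne hj, Function.update_of_ne hj]
      have := hh j
      rwa [Function.update_of_ne hj] at this
  · intro h hh
    rw [Fintype.mem_piFinset] at hh ⊢
    intro j
    by_cases hj : j = i0
    · subst hj
      show Function.update h j c j ∈ Function.update t j {c} j
      rw [Function.update_self, Function.update_self]
      exact Finset.mem_singleton_self _
    · show Function.update h i0 c j ∈ Function.update t i0 {c} j
      rw [Function.update_of_ne hj, Function.update_of_ne hj]
      have := hh j
      rwa [Function.update_of_ne hj] at this
  · intro h hh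
    have h0 : h i0 = c := by
      have := (Fintype.mem_piFinset.mp hh) i0
      rw [Function.update_self] at this
      exact Finset.mem_singleton.mp this
    show Function.update (Function.update h i0 c') i0 c = h
    rw [Function.update_idem, ← h0, Function.update_eq_self]
  · intro h hh
    have h0 : h i0 = c' := by
      have := (Fintype.mem_piFinset.mp hh) i0
      rw [Function.update_self] at this
      exact Finset.mem_singleton.mp this
    show Function.update (Function.update h i0 c) i0 c' = h
    rw [Function.update_idem, ← h0, Function.update_eq_self]
  · intro h hh
    have h0 : h i0 = c := by
      have := (Fintype.mem_piFinset.mp hh) i0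
      rw [Function.update_self] at this
      exact Finset.mem_singleton.mp this
    show F h = F (Function.update (Function.update h i0 c') i0 c)
    rw [Function.update_idem, ← h0, Function.update_eq_self]

private lemma SFa_insert_update {d : ℕ} {N : Fin d → ℕ} (E : Finset (Fin d)) {j₀ : Fin d}
    (hj₀ : j₀ ∉ E) (g : ∀ j, Fin (N j)) (a : Fin (N j₀)) :
    Function.update (SFa (insert j₀ E) g) j₀ {a} = SFa E (Function.update g j₀ a) := by
  funext j
  by_cases hj : j = j₀
  · subst hj
    rw [Function.update_self]
    simp [SFa, hj₀]
  · rw [Function.update_of_ne hj]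
    by_cases hjE : j ∈ E
    · simp [SFa, hjE, Finset.mem_insert_of_mem hjE]
    · have : j ∉ insert j₀ E := by simp [hj, hjE]
      simp [SFa, hjE, this, Function.update_of_ne hj]

private lemma Ca_insert {d : ℕ} {N M : Fin d → ℕ} (X : (∀ j, Fin (N j)) → ℝ)
    (ψ : ∀ j, Fin (M j) → Fin (N j) → ℝ) (E : Finset (Fin d)) {j₀ : Fin d} (hj₀ : j₀ ∉ E)
    (β : ∀ j, Fin (M j)) (k : Fin (M j₀)) (g : ∀ j, Fin (N j)) :
    Ca X ψ (insert j₀ E) (Function.update β j₀ k) g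
      = ∑ a, ψ j₀ k a * Ca X ψ E β (Function.update g j₀ a) := by
  have key : ∀ a : Fin (N j₀),
      (∑ h ∈ Fintype.piFinset (SFa E (Function.update g j₀ a)),
        X h * ∏ j ∈ insert j₀ E, ψ j (Function.update β j₀ k j) (h j))
      = ψ j₀ k a * Ca X ψ E β (Function.update g j₀ a) := by
    intro a
    unfold Ca
    rw [Finset.mul_sum]
    refine Finset.sum_congr rfl fun h hh => ?_
    have h0 : h j₀ = a := by
      have := mem_SFa_of_not_mem hh hj₀
      rwa [Function.update_self] at this
    rw [Finset.prod_insert hj₀, Function.update_self, h0]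
    have hp : ∏ j ∈ E, ψ j (Function.update β j₀ k j) (h j) = ∏ j ∈ E, ψ j (β j) (h j) := by
      refine Finset.prod_congr rfl fun j hjE => ?_
      have hj : j ≠ j₀ := fun hq => hj₀ (hq ▸ hjE)
      rw [Function.update_of_ne hj]
    rw [hp]
    ring
  unfold Ca
  rw [piFinset_sum_split (SFa (insert j₀ E) g) j₀]
  have huniv : SFa (insert j₀ E) g j₀ = Finset.univ := by simp [SFa]
  rw [huniv]
  refine Finset.sum_congr rfl fun a _ => ?_
  rw [SFa_insert_update E hj₀ g a]
  exact key a

private lemma Ca_empty {d : ℕ} {N M : Fin d → ℕ} (X : (∀ j, Fin (N j)) → ℝ)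
    (ψ : ∀ j, Fin (M j) → Fin (N j) → ℝ) (β : ∀ j, Fin (M j)) (g : ∀ j, Fin (N j)) :
    Ca X ψ ∅ β g = X g := by
  unfold Ca
  have h1 : Fintype.piFinset (SFa (∅ : Finset (Fin d)) g) = {g} := by
    ext h
    simp [Fintype.mem_piFinset, SFa, funext_iff]
  rw [h1]
  simp

private lemma Ca_update_mem {d : ℕ} {N M : Fin d → ℕ} (X : (∀ j, Fin (N j)) → ℝ)
    (ψ : ∀ j, Fin (M j) → Fin (N j) → ℝ) (E : Finset (Fin d)) {j₀ : Fin d} (hj₀ : j₀ ∉ E)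
    (β : ∀ j, Fin (M j)) (g : ∀ j, Fin (N j)) :
    (fun x => Ca X ψ E β (Function.update g j₀ x)) ∈ colSpaceUnfold X j₀ := by
  have hfun : (fun x => Ca X ψ E β (Function.update g j₀ x))
      = ∑ h ∈ Fintype.piFinset (SFa E g),
          (∏ j ∈ E, ψ j (β j) (h j)) • (fun x => X (Function.update h j₀ x)) := by
    funext x
    rw [Ca_update X ψ E hj₀ β g x, Finset.sum_apply]
    exact Finset.sum_congr rfl fun h _ => by simp [mul_comm]
  rw [hfun]
  exact Submodule.sum_mem _ fun h _ =>
    Submodule.smul_mem _ _ (Submodule.subset_span ⟨h, rfl⟩)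

private lemma main_expansion {d : ℕ} {N M : Fin d → ℕ} (X : (∀ j, Fin (N j)) → ℝ)
    (ψ w : ∀ j, Fin (M j) → Fin (N j) → ℝ) (z : ∀ j, Fin (M j)) (i0 : Fin d)
    (hEXP : ∀ j₀, j₀ ≠ i0 → ∀ u : Fin (N j₀) → ℝ, u ∈ colSpaceUnfold X j₀ → ∀ x,
      u x = ∑ k : Fin (M j₀), (∑ b, ψ j₀ k b * u b) * w j₀ k x) :
    ∀ E : Finset (Fin d), i0 ∉ E → ∀ g : ∀ j, Fin (N j),
      X g = ∑ β ∈ Fintype.piFinset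
          (fun j => if j ∈ E then (Finset.univ : Finset (Fin (M j))) else {z j}),
        Ca X ψ E β g * ∏ j ∈ E, w j (β j) (g j) := by
  intro E
  induction E using Finset.induction_on with
  | empty =>
    intro _ g
    have h1 : (fun j => if j ∈ (∅ : Finset (Fin d)) then (Finset.univ : Finset (Fin (M j)))
        else {z j}) = fun j => ({z j} : Finset (Fin (M j))) := by
      funext j; simp
    rw [h1]
    have h2 : Fintype.piFinset (fun j => ({z j} : Finset (Fin (M j)))) = {z} := by
      ext h
      simp [Fintype.mem_piFinset, funext_iff]
    rw [h2, Finset.sum_singleton, Ca_empty]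
    simp
  | @insert j₀ E hj₀E ih =>
    intro hni0 g
    have hj₀i0 : j₀ ≠ i0 := fun h => hni0 (h ▸ Finset.mem_insert_self j₀ E)
    have hi0E : i0 ∉ E := fun h => hni0 (Finset.mem_insert_of_mem h)
    set T' : ∀ j, Finset (Fin (M j)) :=
      fun j => if j ∈ insert j₀ E then (Finset.univ : Finset (Fin (M j))) else {z j} with hT'
    rw [piFinset_sum_split T' j₀]
    have hT'j₀ : T' j₀ = Finset.univ := by simp [hT']
    rw [hT'j₀]
    have hBE : Function.update T' j₀ {z j₀}
        = fun j => if j ∈ E then (Finset.univ : Finset (Fin (M j))) else {z j} := by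
      funext j
      by_cases hj : j = j₀
      · subst hj
        rw [Function.update_self, if_neg hj₀E]
      · rw [Function.update_of_ne hj, hT']
        by_cases hjE : j ∈ E
        · simp [hjE, Finset.mem_insert_of_mem hjE]
        · have : j ∉ insert j₀ E := by simp [hj, hjE]
          simp [hjE, this]
    have hswap : ∀ k : Fin (M j₀),
        (∑ β ∈ Fintype.piFinset (Function.update T' j₀ {k}),
          Ca X ψ (insert j₀ E) β g * ∏ j ∈ insert j₀ E, w j (β j) (g j))
        = ∑ β ∈ Fintype.piFinset
            (fun j => if j ∈ E then (Finset.univ : Finset (Fin (M j))) else {z j}),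
          Ca X ψ (insert j₀ E) (Function.update β j₀ k) g
            * ∏ j ∈ insert j₀ E, w j (Function.update β j₀ k j) (g j) := by
      intro k
      rw [piFinset_sum_singleton_swap T' j₀ k (z j₀)
        (fun β => Ca X ψ (insert j₀ E) β g * ∏ j ∈ insert j₀ E, w j (β j) (g j)), hBE]
    calc X g
        = ∑ β ∈ Fintype.piFinset
            (fun j => if j ∈ E then (Finset.univ : Finset (Fin (M j))) else {z j}),
          Ca X ψ E β g * ∏ j ∈ E, w j (β j) (g j) := ih hi0E g
      _ = ∑ β ∈ Fintype.piFinset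
            (fun j => if j ∈ E then (Finset.univ : Finset (Fin (M j))) else {z j}),
          ∑ k : Fin (M j₀), Ca X ψ (insert j₀ E) (Function.update β j₀ k) g
            * ∏ j ∈ insert j₀ E, w j (Function.update β j₀ k j) (g j) := by
          refine Finset.sum_congr rfl fun β hβ => ?_
          -- inner expansion at mode j₀
          set u : Fin (N j₀) → ℝ := fun x => Ca X ψ E β (Function.update g j₀ x) with hu
          have humem : u ∈ colSpaceUnfold X j₀ := Ca_update_mem X ψ E hj₀E β g
          have hprod : ∀ k : Fin (M j₀),
              ∏ j ∈ insert j₀ E, w j (Function.update β j₀ k j) (g j)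
                = w j₀ k (g j₀) * ∏ j ∈ E, w j (β j) (g j) := by
            intro k
            rw [Finset.prod_insert hj₀E, Function.update_self]
            congr 1
            refine Finset.prod_congr rfl fun j hjE => ?_
            have hj : j ≠ j₀ := fun hq => hj₀E (hq ▸ hjE)
            rw [Function.update_of_ne hj]
          have hCa : ∀ k : Fin (M j₀),
              Ca X ψ (insert j₀ E) (Function.update β j₀ k) g
                = ∑ b, ψ j₀ k b * u b := by
            intro k
            rw [Ca_insert X ψ E hj₀E β k g]
          have hCg : Ca X ψ E β g = u (g j₀) := by
            rw [hu]
            show _ = Ca X ψ E β (Function.update g j₀ (g j₀))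
            rw [Function.update_eq_self]
          rw [hCg, hEXP j₀ hj₀i0 u humem (g j₀), Finset.sum_mul]
          refine Finset.sum_congr rfl fun k _ => ?_
          rw [hCa k, hprod k]
          have : ∀ b, ψ j₀ k b * u b = u b * ψ j₀ k b := fun b => mul_comm _ _
          simp only [this]
          ring
      _ = ∑ k : Fin (M j₀), ∑ β ∈ Fintype.piFinset
            (fun j => if j ∈ E then (Finset.univ : Finset (Fin (M j))) else {z j}),
          Ca X ψ (insert j₀ E) (Function.update β j₀ k) g
            * ∏ j ∈ insert j₀ E, w j (Function.update β j₀ k j) (g j) :=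
          Finset.sum_comm
      _ = ∑ k : Fin (M j₀), ∑ β ∈ Fintype.piFinset (Function.update T' j₀ {k}),
          Ca X ψ (insert j₀ E) β g * ∏ j ∈ insert j₀ E, w j (β j) (g j) := by
          exact (Finset.sum_congr rfl fun k _ => (hswap k).symm)

private lemma rank_le_of_span_le {n : ℕ} {V : Submodule ℝ (Fin n → ℝ)}
    {t : Finset (Fin n → ℝ)} (hsub : V ≤ Submodule.span ℝ ↑t) :
    Module.finrank ℝ ↥V ≤ t.card :=
  le_trans (Submodule.finrank_mono hsub) (finrank_span_finset_le_card t)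

/-- Any `s`-sparse tensor `X` admits a decomposition
`X = ∑_{i=1}^K a_i^{(1)} ∘ … ∘ a_i^{(d)}` with each `a_i^{(j)}` in the column space
`R_j(X)` of the mode-`j` unfolding and `K ≤ s^(d-1)`. -/
theorem sparse_tensor_outer_decomposition {d : ℕ} {N : Fin d → ℕ} {s : ℕ}
    (hd : 1 ≤ d) (X : (∀ j, Fin (N j)) → ℝ) (hX : SparseTensor s X) :
    ∃ K : ℕ, K ≤ s ^ (d - 1) ∧
      ∃ a : Fin K → (j : Fin d) → (Fin (N j) → ℝ),
        (∀ i j, a i j ∈ colSpaceUnfold X j) ∧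
        ∀ g : ∀ j, Fin (N j), X g = ∑ i : Fin K, ∏ j, a i j (g j) := by
  classical
  by_cases hX0 : ∀ g, X g = 0
  · exact ⟨0, Nat.zero_le _, Fin.elim0, fun i => i.elim0, fun g => by simp [hX0 g]⟩
  push_neg at hX0
  obtain ⟨g₀, hg₀⟩ := hX0
  set i0 : Fin d := ⟨0, hd⟩ with hi0def
  -- the fibers of `X` in each mode generate the column spaces
  have hcol : ∀ (j : Fin d) (g : ∀ j, Fin (N j)),
      (fun b => X (Function.update g j b)) ∈ colSpaceUnfold X j :=
    fun j g => Submodule.subset_span ⟨g, rfl⟩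
  -- the column spaces have dimension at most `s`
  have hrank : ∀ j, Module.finrank ℝ ↥(colSpaceUnfold X j) ≤ s := by
    intro j
    set T : Finset (∀ j, Fin (N j)) :=
      Finset.univ.filter fun g : ∀ j, Fin (N j) => X g ≠ 0 with hT
    have hTs : T.card ≤ s := hX
    set Sj : Finset (Fin (N j)) := T.image fun g => g j with hSj
    have hsub : colSpaceUnfold X j ≤ Submodule.span ℝ
        ↑(Sj.image fun b => (Pi.single b 1 : Fin (N j) → ℝ)) := by
      refine Submodule.span_le.mpr ?_
      rintro v ⟨g, hg⟩
      have hv : (fun b => X (Function.update g j b)) =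
          ∑ b ∈ Sj, X (Function.update g j b) • (Pi.single b 1 : Fin (N j) → ℝ) := by
        have h1 : (fun b => X (Function.update g j b)) =
            ∑ b : Fin (N j), X (Function.update g j b) • (Pi.single b 1 : Fin (N j) → ℝ) := by
          funext x
          rw [Finset.sum_apply]
          simp [Pi.single_apply]
        rw [h1]
        symm
        apply Finset.sum_subset (Finset.subset_univ _)
        intro b _ hb
        have hzb : X (Function.update g j b) = 0 := by
          by_contra hne
          exact hb (Finset.mem_image.mpr ⟨Function.update g j b,
            Finset.mem_filter.mpr ⟨Finset.mem_univ _, hne⟩, Function.update_self _ _ _⟩)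
        simp [hzb]
      rw [← hg]
      simp only [SetLike.mem_coe]
      rw [hv]
      exact Submodule.sum_mem _ fun b hb => Submodule.smul_mem _ _
        (Submodule.subset_span (Finset.mem_coe.mpr (Finset.mem_image_of_mem _ hb)))
    exact le_trans (rank_le_of_span_le hsub)
      (le_trans Finset.card_image_le (le_trans Finset.card_image_le hTs))
  -- the column spaces are nontrivial
  have npos : ∀ j, 0 < Module.finrank ℝ ↥(colSpaceUnfold X j) := by
    intro j
    have hvne : (fun b => X (Function.update g₀ j b)) ≠ 0 := by
      intro h
      have h2 := congrFun h (g₀ j)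
      rw [Function.update_eq_self] at h2
      exact hg₀ h2
    have : Nontrivial ↥(colSpaceUnfold X j) :=
      ⟨⟨⟨_, hcol j g₀⟩, 0, fun hq => hvne (((colSpaceUnfold X j).mk_eq_zero _).mp hq)⟩⟩
    exact Module.finrank_pos
  set M : Fin d → ℕ :=
    fun j => if j = i0 then 1 else Module.finrank ℝ ↥(colSpaceUnfold X j) with hM
  have hMn : ∀ j, j ≠ i0 → M j = Module.finrank ℝ ↥(colSpaceUnfold X j) :=
    fun j h => if_neg h
  have hMpos : ∀ j, 0 < M j := by
    intro j
    by_cases h : j = i0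
    · simp [hM, h]
    · rw [hMn j h]; exact npos j
  have hMle : ∀ j, j ≠ i0 → M j ≤ s := fun j h => (hMn j h) ▸ hrank j
  set z : ∀ j, Fin (M j) := fun j => ⟨0, hMpos j⟩ with hz
  -- projections onto the column spaces
  have proj : ∀ j, ∃ π : (Fin (N j) → ℝ) →ₗ[ℝ] ↥(colSpaceUnfold X j),
      ∀ v (hv : v ∈ colSpaceUnfold X j), π v = ⟨v, hv⟩ := by
    intro j
    obtain ⟨q, hq⟩ := Submodule.exists_isCompl (colSpaceUnfold X j)
    exact ⟨(colSpaceUnfold X j).linearProjOfIsCompl q hq, fun v hv =>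
      Submodule.linearProjOfIsCompl_apply_left hq ⟨v, hv⟩⟩
  choose π hπ using proj
  have bas : ∀ j, Module.Basis (Fin (Module.finrank ℝ ↥(colSpaceUnfold X j))) ℝ
      ↥(colSpaceUnfold X j) := fun j => Module.finBasis ℝ _
  set w : ∀ j, Fin (M j) → Fin (N j) → ℝ := fun j k =>
    if h : j = i0 then 0 else ((bas j) (Fin.cast (hMn j h) k) : Fin (N j) → ℝ) with hw
  set φ : ∀ j, Fin (M j) → (Fin (N j) → ℝ) →ₗ[ℝ] ℝ := fun j k =>
    if h : j = i0 then 0 else ((bas j).coord (Fin.cast (hMn j h) k)).comp (π j) with hφ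
  set ψ : ∀ j, Fin (M j) → Fin (N j) → ℝ := fun j k b => φ j k (Pi.single b 1) with hψ
  have hPSI : ∀ j (k : Fin (M j)) (v : Fin (N j) → ℝ), φ j k v = ∑ b, ψ j k b * v b := by
    intro j k v
    have hv : v = ∑ b, v b • (Pi.single b 1 : Fin (N j) → ℝ) := by
      funext x
      rw [Finset.sum_apply]
      simp [Pi.single_apply]
    conv_lhs => rw [hv]
    rw [map_sum]
    refine Finset.sum_congr rfl fun b _ => ?_
    rw [map_smul, smul_eq_mul, mul_comm]
  have hEXP : ∀ j₀, j₀ ≠ i0 → ∀ u : Fin (N j₀) → ℝ, u ∈ colSpaceUnfold X j₀ → ∀ x,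
      u x = ∑ k : Fin (M j₀), (∑ b, ψ j₀ k b * u b) * w j₀ k x := by
    intro j₀ hj₀ u hu x
    have hcoef : ∀ k : Fin (M j₀), (∑ b, ψ j₀ k b * u b)
        = (bas j₀).repr ⟨u, hu⟩ (Fin.cast (hMn j₀ hj₀) k) := by
      intro k
      rw [← hPSI j₀ k u]
      simp only [hφ, dif_neg hj₀, LinearMap.comp_apply]
      rw [hπ j₀ u hu]
      rfl
    have hrep := (bas j₀).sum_repr ⟨u, hu⟩
    have hval : u x = ∑ k' : Fin (Module.finrank ℝ ↥(colSpaceUnfold X j₀)),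
        (bas j₀).repr ⟨u, hu⟩ k' * ((bas j₀) k' : Fin (N j₀) → ℝ) x := by
      conv_lhs => rw [show u = ((⟨u, hu⟩ : colSpaceUnfold X j₀) : Fin (N j₀) → ℝ) from rfl,
        ← hrep]
      rw [Submodule.coe_sum, Finset.sum_apply]
      refine Finset.sum_congr rfl fun k' _ => ?_
      simp
    rw [hval]
    refine (Fintype.sum_equiv (finCongr (hMn j₀ hj₀)) _ _ fun k => ?_).symm
    rw [hcoef k]
    simp only [hw, dif_neg hj₀]
    rfl
  -- assemble
  set Eall : Finset (Fin d) := Finset.univ.erase i0 with hEall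
  have hi0all : i0 ∉ Eall := Finset.notMem_erase i0 Finset.univ
  have hEmem : ∀ j, j ∉ Eall → j = i0 := by
    intro j hj
    by_contra hne
    exact hj (Finset.mem_erase.mpr ⟨hne, Finset.mem_univ j⟩)
  set B : Finset (∀ j, Fin (M j)) := Fintype.piFinset
    (fun j => if j ∈ Eall then (Finset.univ : Finset (Fin (M j))) else {z j}) with hB
  have hmain := main_expansion X ψ w z i0 hEXP Eall hi0all
  refine ⟨B.card, ?_, ?_⟩
  · rw [hB, Fintype.card_piFinset]
    have hfil : Finset.univ.filter (fun j => j ∈ Eall) = Eall := by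
      ext j; simp
    calc (∏ j, (if j ∈ Eall then (Finset.univ : Finset (Fin (M j))) else {z j}).card)
        ≤ ∏ j, (if j ∈ Eall then s else 1) := by
          refine Finset.prod_le_prod' fun j _ => ?_
          by_cases hj : j ∈ Eall
          · simp only [if_pos hj]
            rw [Finset.card_univ, Fintype.card_fin]
            exact hMle j (Finset.mem_erase.mp hj).1
          · simp [if_neg hj]
      _ = ∏ j ∈ Eall, s := by rw [← Finset.prod_filter, hfil]
      _ = s ^ Eall.card := Finset.prod_const s
      _ = s ^ (d - 1) := by
          rw [hEall, Finset.card_erase_of_mem (Finset.mem_univ i0), Finset.card_univ,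
            Fintype.card_fin]
  · set e : Fin B.card ≃ {β // β ∈ B} := B.equivFin.symm with he
    refine ⟨fun i j => if j = i0 then
        (fun x => Ca X ψ Eall (e i).1 (Function.update g₀ j x)) else w j ((e i).1 j), ?_, ?_⟩
    · intro i j
      by_cases hj : j = i0
      · subst hj
        simp only [if_true]
        exact Ca_update_mem X ψ Eall hi0all (e i).1 g₀
      · simp only []
        rw [if_neg hj]
        simp only [hw, dif_neg hj]
        exact SetLike.coe_mem _
    · intro g
      rw [hmain g]
      rw [← Finset.sum_coe_sort B (fun β => Ca X ψ Eall β g * ∏ j ∈ Eall, w j (β j) (g j))]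
      rw [← Equiv.sum_comp e (fun βs : {β // β ∈ B} =>
        Ca X ψ Eall βs.1 g * ∏ j ∈ Eall, w j (βs.1 j) (g j))]
      refine Finset.sum_congr rfl fun i _ => ?_
      rw [← Finset.mul_prod_erase Finset.univ _ (Finset.mem_univ i0)]
      simp only [if_true]
      have hC : Ca X ψ Eall (e i).1 (Function.update g₀ i0 (g i0)) = Ca X ψ Eall (e i).1 g := by
        refine Ca_congr X ψ Eall (e i).1 _ _ fun j hj => ?_
        have hji := hEmem j hj
        subst hji
        rw [Function.update_self]
      rw [hC]
      congr 1
      refine Finset.prod_congr rfl fun j hj => ?_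
      have hjne : j ≠ i0 := (Finset.mem_erase.mp hj).1
      rw [if_neg hjne]
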